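/- Let n ≥ 2, let L = {y ∈ ℝⁿ : y₁ ≥ √(y₂² + ⋯ + yₙ²)} be the Lorentz cone, let J = diag(1, −1, …, −1) ∈ ℝ^{n×n}, let A ∈ ℝ^{n×n} be symmetric with eigenvalues λ₁ ≤ λ₂ ≤ ⋯ ≤ λₙ (counted with multiplicity, with a corresponding orthonormal system of eigenvectors), and let v¹ be a unit eigenvector of A corresponding to λ₁. If v¹ ∈ L and there exists ρ ≥ 0 such that λ₂Iₙ − A − ρJ is positive semidefinite, then the sublevel set [φ_A ≤ c] = {x ∈ int(L) : ⟨Ax, x⟩ ≤ c‖x‖²} is convex for every c ∈ ℝ (i.e., q_A is spherically quasi-convex). -/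

import Mathlib

open scoped RealInnerProductSpace

/-- The quadratic form `x ↦ ⟨A x, x⟩` associated with a matrix `A`. -/
noncomputable def quadForm {n : ℕ} (A : Matrix (Fin n) (Fin n) ℝ)
    (x : EuclideanSpace ℝ (Fin n)) : ℝ :=
  ⟪Matrix.toEuclideanLin A x, x⟫

/-- `K` is a cone: closed under multiplication by positive scalars. -/
def IsCone {n : ℕ} (K : Set (EuclideanSpace ℝ (Fin n))) : Prop :=
  ∀ ⦃t : ℝ⦄, 0 < t → ∀ ⦃x⦄, x ∈ K → t • x ∈ K

/-- A proper cone: a pointed closed convex cone with nonempty interior. -/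
def IsProperCone {n : ℕ} (K : Set (EuclideanSpace ℝ (Fin n))) : Prop :=
  IsCone K ∧ Convex ℝ K ∧ IsClosed K ∧ K ∩ (-K) ⊆ {0} ∧ (interior K).Nonempty

/-- The dual cone `K* = {u : ⟨u, y⟩ ≥ 0 for all y ∈ K}`. -/
def dualCone {n : ℕ} (K : Set (EuclideanSpace ℝ (Fin n))) : Set (EuclideanSpace ℝ (Fin n)) :=
  {u | ∀ y ∈ K, 0 ≤ ⟪u, y⟫}

/-- The sublevel set `[φ_A ≤ c] = {x ∈ int K : ⟨A x, x⟩ ≤ c ‖x‖²}`. -/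
noncomputable def sublevel {n : ℕ} (A : Matrix (Fin n) (Fin n) ℝ)
    (K : Set (EuclideanSpace ℝ (Fin n))) (c : ℝ) : Set (EuclideanSpace ℝ (Fin n)) :=
  {x ∈ interior K | quadForm A x ≤ c * ‖x‖ ^ 2}

/-- `‖x²‖² = x₂² + ⋯ + xₙ²`, the squared norm of the tail of `x`. -/
noncomputable def tailNormSq {n : ℕ} [NeZero n] (x : EuclideanSpace ℝ (Fin n)) : ℝ :=
  ∑ i ∈ Finset.univ.erase 0, x i ^ 2

/-- The Lorentz cone `{y : √(y₂² + ⋯ + yₙ²) ≤ y₁}`. -/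
noncomputable def lorentzCone (n : ℕ) [NeZero n] : Set (EuclideanSpace ℝ (Fin n)) :=
  {y | Real.sqrt (tailNormSq y) ≤ y 0}

open Matrix
section Aux

variable {n : ℕ} [NeZero n]

/-- The projection of `x` killing the `0`-th coordinate. -/
noncomputable def tailVec (x : EuclideanSpace ℝ (Fin n)) : EuclideanSpace ℝ (Fin n) :=
  WithLp.toLp 2 (fun i => if i = 0 then 0 else x i)

lemma norm_tailVec (x : EuclideanSpace ℝ (Fin n)) :
    ‖tailVec x‖ = Real.sqrt (tailNormSq x) := by
  rw [EuclideanSpace.norm_eq]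
  congr 1
  rw [tailNormSq, ← Finset.sum_erase (Finset.univ) (f := fun i => ‖tailVec x i‖ ^ 2) (a := 0)
    (by simp [tailVec])]
  refine Finset.sum_congr rfl fun i hi => ?_
  have : i ≠ 0 := Finset.ne_of_mem_erase hi
  simp [tailVec, this, Real.norm_eq_abs, sq_abs]

lemma tailVec_comb (a b : ℝ) (x y : EuclideanSpace ℝ (Fin n)) :
    tailVec (a • x + b • y) = a • tailVec x + b • tailVec y := by
  ext i
  simp only [tailVec, PiLp.toLp_apply, PiLp.add_apply, PiLp.smul_apply, smul_eq_mul]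
  split <;> ring

lemma mem_lorentz_iff {x : EuclideanSpace ℝ (Fin n)} :
    x ∈ lorentzCone n ↔ ‖tailVec x‖ ≤ x 0 := by
  rw [lorentzCone, Set.mem_setOf_eq, norm_tailVec]

lemma lorentz_fst_nonneg {x : EuclideanSpace ℝ (Fin n)} (hx : x ∈ lorentzCone n) : 0 ≤ x 0 :=
  le_trans (Real.sqrt_nonneg _) hx

lemma convex_lorentz : Convex ℝ (lorentzCone n) := by
  intro x hx y hy a b ha hb hab
  rw [mem_lorentz_iff, tailVec_comb]
  have h1 : (a • x + b • y) 0 = a * x 0 + b * y 0 := by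
    simp [PiLp.add_apply, PiLp.smul_apply]
  rw [h1]
  calc ‖a • tailVec x + b • tailVec y‖ ≤ ‖a • tailVec x‖ + ‖b • tailVec y‖ := norm_add_le _ _
    _ = a * ‖tailVec x‖ + b * ‖tailVec y‖ := by
        rw [norm_smul, norm_smul, Real.norm_eq_abs, Real.norm_eq_abs, abs_of_nonneg ha,
          abs_of_nonneg hb]
    _ ≤ a * x 0 + b * y 0 := by
        gcongr
        · exact mem_lorentz_iff.mp hx
        · exact mem_lorentz_iff.mp hy

lemma inner_split (u x : EuclideanSpace ℝ (Fin n)) :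
    ⟪u, x⟫ = u 0 * x 0 + ⟪tailVec u, tailVec x⟫ := by
  rw [real_inner_comm x u, real_inner_comm (tailVec x) (tailVec u)]
  simp only [PiLp.inner_apply, RCLike.inner_apply, conj_trivial]
  rw [← Finset.add_sum_erase (Finset.univ) (f := fun i => u i * x i) (a := 0) (Finset.mem_univ 0)]
  congr 1
  rw [← Finset.sum_erase (Finset.univ) (f := fun i => tailVec u i * tailVec x i) (a := 0)
    (by simp [tailVec])]
  refine Finset.sum_congr rfl fun i hi => ?_
  have : i ≠ 0 := Finset.ne_of_mem_erase hi
  simp [tailVec, this]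

lemma lorentz_inner_nonneg {u x : EuclideanSpace ℝ (Fin n)}
    (hu : u ∈ lorentzCone n) (hx : x ∈ lorentzCone n) : 0 ≤ ⟪u, x⟫ := by
  rw [inner_split]
  have h1 : |⟪tailVec u, tailVec x⟫| ≤ ‖tailVec u‖ * ‖tailVec x‖ := abs_real_inner_le_norm _ _
  have h2 : ‖tailVec u‖ * ‖tailVec x‖ ≤ u 0 * x 0 :=
    mul_le_mul (mem_lorentz_iff.mp hu) (mem_lorentz_iff.mp hx) (norm_nonneg _)
      (lorentz_fst_nonneg hu)
  have := neg_abs_le ⟪tailVec u, tailVec x⟫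
  linarith

lemma tailNormSq_nonneg (x : EuclideanSpace ℝ (Fin n)) : 0 ≤ tailNormSq x :=
  Finset.sum_nonneg fun i _ => sq_nonneg _

lemma lorentz_tail_le {x : EuclideanSpace ℝ (Fin n)} (hx : x ∈ lorentzCone n) :
    tailNormSq x ≤ x 0 ^ 2 := by
  have h := mem_lorentz_iff.mp hx
  have h2 := norm_tailVec x
  nlinarith [norm_nonneg (tailVec x), Real.sq_sqrt (tailNormSq_nonneg x),
    Real.sqrt_nonneg (tailNormSq x)]

lemma quadForm_eq_sum (A : Matrix (Fin n) (Fin n) ℝ) (x : EuclideanSpace ℝ (Fin n)) :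
    quadForm A x = ∑ i, (A *ᵥ (WithLp.equiv 2 (Fin n → ℝ) x)) i * x i := by
  rw [quadForm, Matrix.toEuclideanLin_apply]
  simp only [PiLp.inner_apply, RCLike.inner_apply, conj_trivial]
  exact Finset.sum_congr rfl fun i _ => mul_comm _ _

lemma norm_sq_eq_dot (x : EuclideanSpace ℝ (Fin n)) :
    ‖x‖ ^ 2 = ∑ i, x i * x i := by
  rw [← real_inner_self_eq_norm_sq]
  simp only [PiLp.inner_apply, RCLike.inner_apply, conj_trivial]

end Aux

/-- Proposition 5 of the paper: if `v¹ ∈ L` and `λ₂Iₙ - A - ρJ` is positive semidefinite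
for some `ρ ≥ 0`, then all sublevel sets `[φ_A ≤ c]` over the Lorentz cone are convex
(i.e. `q_A` is spherically quasi-convex). -/
theorem stmt18 (n : ℕ) [NeZero n] (hn : 2 ≤ n)
    (A : Matrix (Fin n) (Fin n) ℝ) (hA : A.IsSymm)
    (v : Fin n → EuclideanSpace ℝ (Fin n)) (hv : Orthonormal ℝ v)
    (lam : Fin n → ℝ) (heig : ∀ i, Matrix.toEuclideanLin A (v i) = lam i • v i)
    (hmono : Monotone lam)
    (hv1 : v 0 ∈ lorentzCone n)
    (hρ : ∃ ρ : ℝ, 0 ≤ ρ ∧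
      (lam 1 • (1 : Matrix (Fin n) (Fin n) ℝ) - A -
        ρ • Matrix.diagonal (fun i : Fin n => if i = 0 then (1 : ℝ) else -1)).PosSemidef) :
    ∀ c : ℝ, Convex ℝ (sublevel A (lorentzCone n) c) := by
  classical
  intro c
  obtain ⟨ρ, hρ0, hP⟩ := hρ
  -- an orthonormal basis whose vectors are the `v i`
  have hcard : Fintype.card (Fin n) = Module.finrank ℝ (EuclideanSpace ℝ (Fin n)) := by
    simp
  let b0 := basisOfOrthonormalOfCardEqFinrank hv hcard
  have hb0 : ⇑b0 = v := coe_basisOfOrthonormalOfCardEqFinrank hv hcard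
  let b : OrthonormalBasis (Fin n) ℝ (EuclideanSpace ℝ (Fin n)) :=
    b0.toOrthonormalBasis (by rw [hb0]; exact hv)
  have hb : ⇑b = v := by rw [Module.Basis.coe_toOrthonormalBasis, hb0]
  have hnormsq : ∀ x : EuclideanSpace ℝ (Fin n), ‖x‖ ^ 2 = ∑ i, ⟪v i, x⟫ ^ 2 := by
    intro x
    have h := b.sum_inner_mul_inner x x
    simp only [hb] at h
    rw [← real_inner_self_eq_norm_sq, ← h]
    refine Finset.sum_congr rfl fun i _ => ?_
    rw [real_inner_comm x (v i), sq]
  have hH : A.IsHermitian := by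
    rw [Matrix.IsHermitian, Matrix.conjTranspose_eq_transpose_of_trivial]; exact hA
  have hsym : (Matrix.toEuclideanLin A).IsSymmetric :=
    Matrix.isHermitian_iff_isSymmetric.mp hH
  have hq : ∀ x : EuclideanSpace ℝ (Fin n), quadForm A x = ∑ i, lam i * ⟪v i, x⟫ ^ 2 := by
    intro x
    have h := b.sum_inner_mul_inner (Matrix.toEuclideanLin A x) x
    simp only [hb] at h
    rw [quadForm, ← h]
    refine Finset.sum_congr rfl fun i _ => ?_
    have h1 : ⟪Matrix.toEuclideanLin A x, v i⟫ = lam i * ⟪v i, x⟫ := by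
      rw [hsym x (v i), heig i, real_inner_smul_right, real_inner_comm]
    rw [h1, sq]; ring
  rcases le_or_gt (lam 1) c with hc | hc
  · -- case `λ₂ ≤ c`: the sublevel set is all of the interior
    have hset : sublevel A (lorentzCone n) c = interior (lorentzCone n) := by
      ext x
      simp only [sublevel, Set.mem_sep_iff]
      refine ⟨fun h => h.1, fun h => ⟨h, ?_⟩⟩
      have hxL : x ∈ lorentzCone n := interior_subset h
      set x' : Fin n → ℝ := WithLp.equiv 2 (Fin n → ℝ) x with hx'
      have hpos : (0:ℝ) ≤ dotProduct (star x')
          ((lam 1 • (1 : Matrix (Fin n) (Fin n) ℝ) - A -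
            ρ • Matrix.diagonal (fun i : Fin n => if i = 0 then (1 : ℝ) else -1)) *ᵥ x') := by
        have := hP.re_dotProduct_nonneg x'
        simpa using this
      have hdot : (dotProduct (star x')
          ((lam 1 • (1 : Matrix (Fin n) (Fin n) ℝ) - A -
            ρ • Matrix.diagonal (fun i : Fin n => if i = 0 then (1 : ℝ) else -1)) *ᵥ x'))
          = lam 1 * ‖x‖ ^ 2 - quadForm A x - ρ * (x 0 ^ 2 - tailNormSq x) := by
        simp only [Matrix.sub_mulVec, Matrix.smul_mulVec, Matrix.one_mulVec,
          dotProduct_sub, dotProduct_smul, smul_eq_mul, star_trivial]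
        rw [quadForm_eq_sum, norm_sq_eq_dot]
        have hxx : dotProduct x' x' = ∑ i, x i * x i := rfl
        have hAx : dotProduct x' (A *ᵥ x') = ∑ i, (A *ᵥ x') i * x i := by
          rw [dotProduct]
          exact Finset.sum_congr rfl fun i _ => mul_comm _ _
        have hDx : dotProduct x'
            ((Matrix.diagonal fun i : Fin n => if i = 0 then (1:ℝ) else -1) *ᵥ x')
            = x 0 ^ 2 - tailNormSq x := by
          rw [dotProduct]
          have hterm : ∀ i : Fin n, x' i *
              ((Matrix.diagonal fun i : Fin n => if i = 0 then (1:ℝ) else -1) *ᵥ x') i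
              = if i = 0 then x i ^ 2 else -(x i ^ 2) := by
            intro i
            have hxi : x' i = x i := rfl
            rw [Matrix.mulVec_diagonal, hxi]
            split <;> ring
          rw [Finset.sum_congr rfl fun i _ => hterm i,
            ← Finset.add_sum_erase (Finset.univ)
              (f := fun i => if i = 0 then x i ^ 2 else -(x i ^ 2)) (a := 0) (Finset.mem_univ 0)]
          have : ∑ i ∈ Finset.univ.erase 0, (if i = 0 then x i ^ 2 else -(x i ^ 2))
              = -tailNormSq x := by
            rw [tailNormSq, ← Finset.sum_neg_distrib]
            refine Finset.sum_congr rfl fun i hi => ?_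
            rw [if_neg (Finset.ne_of_mem_erase hi)]
          rw [this, if_pos rfl]
          ring
        rw [hxx, hAx, hDx]
      rw [hdot] at hpos
      have ht := lorentz_tail_le hxL
      have hx2 : (0:ℝ) ≤ ‖x‖ ^ 2 := sq_nonneg _
      nlinarith [mul_nonneg hρ0 (sub_nonneg.mpr ht), mul_le_mul_of_nonneg_right hc hx2]
    rw [hset]
    exact convex_lorentz.interior
  · -- case `c < λ₂`
    set β : ℝ := Real.sqrt (max (c - lam 0) 0) with hβdef
    have hβ : 0 ≤ β := Real.sqrt_nonneg _
    have hβsq : β ^ 2 = max (c - lam 0) 0 := Real.sq_sqrt (le_max_right _ _)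
    set μ : Fin n → ℝ := fun i => Real.sqrt (if i = 0 then max (lam 0 - c) 0 else lam i - c)
      with hμdef
    have hμsq : ∀ i : Fin n, μ i ^ 2 = if i = 0 then max (lam 0 - c) 0 else lam i - c := by
      intro i
      rw [hμdef]
      rw [Real.sq_sqrt]
      split
      · exact le_max_right _ _
      · rename_i hi
        have h1 : (1 : Fin n) ≤ i := by
          rw [Fin.le_def]
          have hv1 : (1 : Fin n).val = 1 := by
            rw [Fin.val_one']
            exact Nat.mod_eq_of_lt hn
          rw [hv1]
          have : i.val ≠ 0 := fun h => hi (Fin.ext (by simpa using h))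
          omega
        have := hmono h1
        linarith
    set g : EuclideanSpace ℝ (Fin n) → EuclideanSpace ℝ (Fin n) :=
      fun x => ∑ i, (μ i * ⟪v i, x⟫) • v i with hgdef
    have hortho : ∀ i j : Fin n, ⟪v i, v j⟫ = if i = j then (1:ℝ) else 0 :=
      fun i j => orthonormal_iff_ite.mp hv i j
    have hgj : ∀ (x : EuclideanSpace ℝ (Fin n)) (j : Fin n),
        ⟪v j, g x⟫ = μ j * ⟪v j, x⟫ := by
      intro x j
      rw [hgdef]
      rw [inner_sum]
      simp only [real_inner_smul_right, hortho, mul_ite, mul_one, mul_zero]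
      simp [Finset.sum_ite_eq, Finset.sum_ite_eq']
    have hgnorm : ∀ x : EuclideanSpace ℝ (Fin n),
        ‖g x‖ ^ 2 = ∑ i, μ i ^ 2 * ⟪v i, x⟫ ^ 2 := by
      intro x
      rw [hnormsq (g x)]
      refine Finset.sum_congr rfl fun i _ => ?_
      rw [hgj x i, mul_pow]
    have hkey : ∀ x : EuclideanSpace ℝ (Fin n),
        ‖g x‖ ^ 2 - β ^ 2 * ⟪v 0, x⟫ ^ 2 = quadForm A x - c * ‖x‖ ^ 2 := by
      intro x
      rw [hgnorm x, hq x, hnormsq x, Finset.mul_sum, ← Finset.sum_sub_distrib]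
      have hsplit : ∀ f : Fin n → ℝ, ∑ i, f i = f 0 + ∑ i ∈ Finset.univ.erase 0, f i :=
        fun f => (Finset.add_sum_erase (Finset.univ) f (Finset.mem_univ 0)).symm
      rw [hsplit (fun i => μ i ^ 2 * ⟪v i, x⟫ ^ 2),
        hsplit (fun i => lam i * ⟪v i, x⟫ ^ 2 - c * ⟪v i, x⟫ ^ 2)]
      have he : ∀ i ∈ Finset.univ.erase 0, μ i ^ 2 * ⟪v i, x⟫ ^ 2
          = lam i * ⟪v i, x⟫ ^ 2 - c * ⟪v i, x⟫ ^ 2 := by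
        intro i hi
        rw [hμsq i, if_neg (Finset.ne_of_mem_erase hi)]
        ring
      rw [Finset.sum_congr rfl he, hμsq 0, if_pos rfl, hβsq]
      have hmax := max_zero_sub_eq_self (lam 0 - c)
      have hneg : -(lam 0 - c) = c - lam 0 := by ring
      rw [hneg] at hmax
      linear_combination ⟪v 0, x⟫ ^ 2 * hmax
    have hmem : ∀ x : EuclideanSpace ℝ (Fin n), x ∈ lorentzCone n →
        (quadForm A x ≤ c * ‖x‖ ^ 2 ↔ ‖g x‖ ≤ β * ⟪v 0, x⟫) := by
      intro x hx
      have hs : 0 ≤ ⟪v 0, x⟫ := lorentz_inner_nonneg hv1 hx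
      have h1 : quadForm A x ≤ c * ‖x‖ ^ 2 ↔ ‖g x‖ ^ 2 ≤ (β * ⟪v 0, x⟫) ^ 2 := by
        rw [mul_pow]
        constructor <;> intro h <;> nlinarith [hkey x]
      rw [h1]
      constructor
      · intro h
        calc ‖g x‖ = Real.sqrt (‖g x‖ ^ 2) := (Real.sqrt_sq (norm_nonneg _)).symm
          _ ≤ Real.sqrt ((β * ⟪v 0, x⟫) ^ 2) := Real.sqrt_le_sqrt h
          _ = β * ⟪v 0, x⟫ := Real.sqrt_sq (mul_nonneg hβ hs)
      · intro h
        exact pow_le_pow_left₀ (norm_nonneg _) h 2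
    have hglin : ∀ (a b : ℝ) (x y : EuclideanSpace ℝ (Fin n)),
        g (a • x + b • y) = a • g x + b • g y := by
      intro a b x y
      simp only [hgdef]
      have hterm : ∀ i : Fin n, (μ i * ⟪v i, a • x + b • y⟫) • v i
          = a • ((μ i * ⟪v i, x⟫) • v i) + b • ((μ i * ⟪v i, y⟫) • v i) := by
        intro i
        rw [inner_add_right, real_inner_smul_right, real_inner_smul_right, smul_smul, smul_smul,
          ← add_smul]
        congr 1
        ring
      rw [Finset.sum_congr rfl fun i _ => hterm i, Finset.sum_add_distrib,
        ← Finset.smul_sum, ← Finset.smul_sum]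
    intro x hx y hy a b ha hb hab
    simp only [sublevel, Set.mem_sep_iff] at hx hy ⊢
    have hzI : a • x + b • y ∈ interior (lorentzCone n) :=
      convex_lorentz.interior hx.1 hy.1 ha hb hab
    refine ⟨hzI, ?_⟩
    have hzL : a • x + b • y ∈ lorentzCone n := interior_subset hzI
    apply (hmem _ hzL).mpr
    have hx' : ‖g x‖ ≤ β * ⟪v 0, x⟫ := (hmem x (interior_subset hx.1)).mp hx.2
    have hy' : ‖g y‖ ≤ β * ⟪v 0, y⟫ := (hmem y (interior_subset hy.1)).mp hy.2
    have hinner : ⟪v 0, a • x + b • y⟫ = a * ⟪v 0, x⟫ + b * ⟪v 0, y⟫ := by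
      rw [inner_add_right, real_inner_smul_right, real_inner_smul_right]
    calc ‖g (a • x + b • y)‖ = ‖a • g x + b • g y‖ := by rw [hglin]
      _ ≤ ‖a • g x‖ + ‖b • g y‖ := norm_add_le _ _
      _ = a * ‖g x‖ + b * ‖g y‖ := by
          rw [norm_smul, norm_smul, Real.norm_eq_abs, Real.norm_eq_abs, abs_of_nonneg ha,
            abs_of_nonneg hb]
      _ ≤ a * (β * ⟪v 0, x⟫) + b * (β * ⟪v 0, y⟫) := by gcongr
      _ = β * ⟪v 0, a • x + b • y⟫ := by rw [hinner]; ring
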